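/- Assume ‖∇L(Θ*)‖_{∞,∞} ≤ λ/2, that |S_j| ≤ s for every 1 ≤ j ≤ d, and let Θ̂ be a global minimizer over ℝ^{m×d} of Θ ↦ L(Θ) + λ‖Θ‖_{1,1}. Then for every column index 1 ≤ j ≤ d, ⟨(∇L(Θ̂))_{·,j} − (∇L(Θ*))_{·,j}, Θ̂_{·,j} − Θ*_{·,j}⟩ ≤ 6 λ √s ‖Θ̂_{·,j} − Θ*_{·,j}‖₂, where ⟨·,·⟩ is the Euclidean inner product on ℝ^m and ‖·‖₂ the Euclidean norm. -/

import Mathlib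

open Matrix Finset

/-- Bound on the symmetric Bregman divergence term: under `‖∇L(Θ*)‖_{∞,∞} ≤ λ/2` and
column supports of size at most `s`, every global minimizer `Θ̂` of
`Θ ↦ L(Θ) + λ‖Θ‖_{1,1}` satisfies, for each column `j`,
`⟨(∇L(Θ̂))_{·,j} − (∇L(Θ*))_{·,j}, Θ̂_{·,j} − Θ*_{·,j}⟩ ≤ 6 λ √s ‖Θ̂_{·,j} − Θ*_{·,j}‖₂`. -/
theorem bregman_divergence_bound (T m d s : ℕ) (hT : 0 < T) (hm : 0 < m) (hd : 0 < d)
    (hs : 0 < s)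
    (Y : Matrix (Fin T) (Fin d) ℝ) (X : Matrix (Fin T) (Fin m) ℝ)
    (lam : ℝ) (hlam : 0 < lam)
    (Θstar Θhat : Matrix (Fin m) (Fin d) ℝ)
    (hgrad : ∀ (i : Fin m) (j : Fin d),
      |((1 / (T : ℝ)) • (Xᵀ * (X * Θstar - Y))) i j| ≤ lam / 2)
    (hsupp : ∀ j : Fin d,
      (Finset.univ.filter (fun i : Fin m => Θstar i j ≠ 0)).card ≤ s)
    (hmin : ∀ Θ : Matrix (Fin m) (Fin d) ℝ,
      (1 / (2 * (T : ℝ))) * (∑ t, ∑ j, (Y t j - (X * Θhat) t j) ^ 2)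
          + lam * ∑ i, ∑ j, |Θhat i j|
        ≤ (1 / (2 * (T : ℝ))) * (∑ t, ∑ j, (Y t j - (X * Θ) t j) ^ 2)
          + lam * ∑ i, ∑ j, |Θ i j|) :
    ∀ j : Fin d,
      ∑ i, (((1 / (T : ℝ)) • (Xᵀ * (X * Θhat - Y))) i j
              - ((1 / (T : ℝ)) • (Xᵀ * (X * Θstar - Y))) i j)
            * (Θhat i j - Θstar i j)
        ≤ 6 * lam * Real.sqrt s * Real.sqrt (∑ i, (Θhat i j - Θstar i j) ^ 2) := by
  intro j
  have hT' : (0:ℝ) < T := by exact_mod_cast hT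
  -- notation
  set Δ : Fin m → ℝ := fun i => Θhat i j - Θstar i j with hΔdef
  have hΔ : ∀ i, Θhat i j - Θstar i j = Δ i := fun i => rfl
  simp only [hΔ]
  set S : Finset (Fin m) := Finset.univ.filter (fun i : Fin m => Θstar i j ≠ 0) with hSdef
  -- the difference of column-j entries of X*Θhat and X*Θstar
  have hab : ∀ t, (X * Θhat) t j - (X * Θstar) t j = ∑ i, X t i * Δ i := by
    intro t
    simp only [Matrix.mul_apply, ← Finset.sum_sub_distrib]
    exact Finset.sum_congr rfl fun i _ => by simp [hΔdef]; ring
  -- gradient entries as explicit sums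
  have hG : ∀ (Θ : Matrix (Fin m) (Fin d) ℝ) (i : Fin m),
      ((1 / (T : ℝ)) • (Xᵀ * (X * Θ - Y))) i j
        = (1/(T:ℝ)) * ∑ t, X t i * ((X * Θ) t j - Y t j) := by
    intro Θ i
    simp [Matrix.smul_apply, Matrix.mul_apply, Matrix.sub_apply, Matrix.transpose_apply,
      smul_eq_mul]
  -- LHS equals (1/T) * ∑_t (∑_i X t i * Δ i)^2
  have key : ∑ i, (((1 / (T : ℝ)) • (Xᵀ * (X * Θhat - Y))) i j
              - ((1 / (T : ℝ)) • (Xᵀ * (X * Θstar - Y))) i j) * Δ i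
      = (1/(T:ℝ)) * ∑ t, (∑ i, X t i * Δ i)^2 := by
    have step1 : ∀ i : Fin m, (((1 / (T : ℝ)) • (Xᵀ * (X * Θhat - Y))) i j
              - ((1 / (T : ℝ)) • (Xᵀ * (X * Θstar - Y))) i j) * Δ i
        = (1/(T:ℝ)) * ∑ t, X t i * ((X * Θhat) t j - (X * Θstar) t j) * Δ i := by
      intro i
      rw [hG Θhat i, hG Θstar i, ← mul_sub, ← Finset.sum_sub_distrib, mul_assoc,
        Finset.sum_mul]
      exact congrArg _ (Finset.sum_congr rfl fun t _ => by ring)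
    rw [Finset.sum_congr rfl (fun i _ => step1 i), ← Finset.mul_sum, Finset.sum_comm]
    congr 1
    refine Finset.sum_congr rfl fun t _ => ?_
    have : ∀ i : Fin m, X t i * ((X * Θhat) t j - (X * Θstar) t j) * Δ i
        = ((X * Θhat) t j - (X * Θstar) t j) * (X t i * Δ i) := fun i => by ring
    rw [Finset.sum_congr rfl (fun i _ => this i), ← Finset.mul_sum, hab t, sq]
  -- cross term identity
  have hcross : ∑ i, (((1 / (T : ℝ)) • (Xᵀ * (X * Θstar - Y))) i j) * Δ i
      = (1/(T:ℝ)) * ∑ t, ((X * Θstar) t j - Y t j) * (∑ i, X t i * Δ i) := by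
    have step1 : ∀ i : Fin m, (((1 / (T : ℝ)) • (Xᵀ * (X * Θstar - Y))) i j) * Δ i
        = (1/(T:ℝ)) * ∑ t, X t i * ((X * Θstar) t j - Y t j) * Δ i := by
      intro i
      rw [hG Θstar i, mul_assoc, Finset.sum_mul]
    rw [Finset.sum_congr rfl (fun i _ => step1 i), ← Finset.mul_sum, Finset.sum_comm]
    congr 1
    refine Finset.sum_congr rfl fun t _ => ?_
    have : ∀ i : Fin m, X t i * ((X * Θstar) t j - Y t j) * Δ i
        = ((X * Θstar) t j - Y t j) * (X t i * Δ i) := fun i => by ring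
    rw [Finset.sum_congr rfl (fun i _ => this i), ← Finset.mul_sum]
  -- basic inequality restricted to column j
  have hcol : (1 / (2 * (T : ℝ))) * (∑ t, (Y t j - (X * Θhat) t j) ^ 2)
      + lam * ∑ i, |Θhat i j|
      ≤ (1 / (2 * (T : ℝ))) * (∑ t, (Y t j - (X * Θstar) t j) ^ 2)
      + lam * ∑ i, |Θstar i j| := by
    set Θ' : Matrix (Fin m) (Fin d) ℝ := fun i k => if k = j then Θstar i j else Θhat i k
      with hΘ'
    have h := hmin Θ'
    have e1 : ∀ (M : Matrix (Fin T) (Fin d) ℝ), (∑ t, ∑ j', (Y t j' - M t j')^2)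
        = (∑ t, (Y t j - M t j)^2) + ∑ t, ∑ j' ∈ ({j}ᶜ : Finset (Fin d)),
            (Y t j' - M t j')^2 := by
      intro M
      rw [← Finset.sum_add_distrib]
      exact Finset.sum_congr rfl fun t _ =>
        Fintype.sum_eq_add_sum_compl j (fun j' => (Y t j' - M t j')^2)
    have e2 : ∀ (M : Matrix (Fin m) (Fin d) ℝ), (∑ i, ∑ j', |M i j'|)
        = (∑ i, |M i j|) + ∑ i, ∑ j' ∈ ({j}ᶜ : Finset (Fin d)), |M i j'| := by
      intro M
      rw [← Finset.sum_add_distrib]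
      exact Finset.sum_congr rfl fun i _ =>
        Fintype.sum_eq_add_sum_compl j (fun j' => |M i j'|)
    rw [e1 (X * Θhat), e1 (X * Θ'), e2 Θhat, e2 Θ'] at h
    -- the off-column parts coincide
    have hXcol : ∀ t, (X * Θ') t j = (X * Θstar) t j := by
      intro t; rw [Matrix.mul_apply, Matrix.mul_apply]; simp [hΘ']
    have hXcol' : ∀ (t) (k : Fin d), k ≠ j → (X * Θ') t k = (X * Θhat) t k := by
      intro t k hk
      rw [Matrix.mul_apply, Matrix.mul_apply]
      exact Finset.sum_congr rfl fun i _ => by simp only [hΘ', if_neg hk]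
    have r1 : ∑ t, (Y t j - (X * Θ') t j)^2 = ∑ t, (Y t j - (X * Θstar) t j)^2 :=
      Finset.sum_congr rfl fun t _ => by rw [hXcol t]
    have r2 : (∑ t, ∑ j' ∈ ({j}ᶜ : Finset (Fin d)), (Y t j' - (X * Θ') t j')^2)
        = ∑ t, ∑ j' ∈ ({j}ᶜ : Finset (Fin d)), (Y t j' - (X * Θhat) t j')^2 := by
      refine Finset.sum_congr rfl fun t _ => Finset.sum_congr rfl fun j' hj' => ?_
      rw [hXcol' t j' (by simpa using hj')]
    have r3 : ∑ i, |Θ' i j| = ∑ i, |Θstar i j| :=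
      Finset.sum_congr rfl fun i _ => by simp [hΘ']
    have r4 : (∑ i, ∑ j' ∈ ({j}ᶜ : Finset (Fin d)), |Θ' i j'|)
        = ∑ i, ∑ j' ∈ ({j}ᶜ : Finset (Fin d)), |Θhat i j'| := by
      refine Finset.sum_congr rfl fun i _ => Finset.sum_congr rfl fun j' hj' => ?_
      have : j' ≠ j := by simpa using hj'
      simp [hΘ', this]
    rw [r1, r2, r3, r4, mul_add, mul_add, mul_add, mul_add] at h
    linarith
  -- expand the squares
  have expand : ∑ t, (Y t j - (X * Θhat) t j)^2
      = ∑ t, (Y t j - (X * Θstar) t j)^2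
        + 2 * ∑ t, ((X * Θstar) t j - Y t j) * (∑ i, X t i * Δ i)
        + ∑ t, (∑ i, X t i * Δ i)^2 := by
    have hpt : ∀ t, (Y t j - (X * Θhat) t j)^2
        = (Y t j - (X * Θstar) t j)^2
          + 2 * (((X * Θstar) t j - Y t j) * (∑ i, X t i * Δ i))
          + (∑ i, X t i * Δ i)^2 := by
      intro t
      have h1 := hab t
      have h2 : (X * Θhat) t j = (X * Θstar) t j + ∑ i, X t i * Δ i := by linarith
      rw [h2]; ring
    rw [Finset.sum_congr rfl (fun t _ => hpt t), Finset.sum_add_distrib,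
      Finset.sum_add_distrib, Finset.mul_sum]
  -- abbreviations for the combination step
  set Q : ℝ := ∑ t, (∑ i, X t i * Δ i)^2 with hQ
  set C : ℝ := ∑ t, ((X * Θstar) t j - Y t j) * (∑ i, X t i * Δ i) with hC
  have hQ0 : 0 ≤ Q := Finset.sum_nonneg fun t _ => sq_nonneg _
  -- bound on the cross term via the gradient bound
  have habs : |∑ i, (((1 / (T : ℝ)) • (Xᵀ * (X * Θstar - Y))) i j) * Δ i|
      ≤ (lam/2) * ∑ i, |Δ i| := by
    calc |∑ i, (((1 / (T : ℝ)) • (Xᵀ * (X * Θstar - Y))) i j) * Δ i|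
        ≤ ∑ i, |(((1 / (T : ℝ)) • (Xᵀ * (X * Θstar - Y))) i j) * Δ i| :=
          Finset.abs_sum_le_sum_abs _ _
      _ ≤ ∑ i, (lam/2) * |Δ i| := Finset.sum_le_sum fun i _ => by
          rw [abs_mul]
          exact mul_le_mul_of_nonneg_right (hgrad i j) (abs_nonneg _)
      _ = (lam/2) * ∑ i, |Δ i| := (Finset.mul_sum _ _ _).symm
  have hE2 : -((lam/2) * ∑ i, |Δ i|) ≤ (1/(T:ℝ)) * C := by
    rw [← hcross]
    have := neg_abs_le (∑ i, (((1 / (T : ℝ)) • (Xᵀ * (X * Θstar - Y))) i j) * Δ i)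
    linarith
  -- support decomposition of the penalty difference
  have hsuppb : ∑ i, |Θstar i j| - ∑ i, |Θhat i j|
      ≤ (∑ i ∈ S, |Δ i|) - ∑ i ∈ Sᶜ, |Δ i| := by
    rw [← Finset.sum_sub_distrib, ← Finset.sum_add_sum_compl S
      (fun i => |Θstar i j| - |Θhat i j|)]
    have h1 : ∑ i ∈ S, (|Θstar i j| - |Θhat i j|) ≤ ∑ i ∈ S, |Δ i| :=
      Finset.sum_le_sum fun i _ => by
        calc |Θstar i j| - |Θhat i j| ≤ |Θstar i j - Θhat i j| := abs_sub_abs_le_abs_sub _ _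
          _ = |Δ i| := by rw [abs_sub_comm]
    have h2 : ∑ i ∈ Sᶜ, (|Θstar i j| - |Θhat i j|) = -∑ i ∈ Sᶜ, |Δ i| := by
      rw [← Finset.sum_neg_distrib]
      refine Finset.sum_congr rfl fun i hi => ?_
      have h0 : Θstar i j = 0 := by
        by_contra hne
        have : i ∈ S := by simp [hSdef, hne]
        exact (Finset.mem_compl.mp hi) this
      simp [hΔdef, h0]
    linarith
  have hsplit : ∑ i, |Δ i| = (∑ i ∈ S, |Δ i|) + ∑ i ∈ Sᶜ, |Δ i| :=
    (Finset.sum_add_sum_compl S _).symm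
  have hScnn : 0 ≤ ∑ i ∈ Sᶜ, |Δ i| := Finset.sum_nonneg fun i _ => abs_nonneg _
  have hSnn : 0 ≤ ∑ i ∈ S, |Δ i| := Finset.sum_nonneg fun i _ => abs_nonneg _
  -- combine the basic inequality
  have hmain : (1/(2*(T:ℝ))) * Q ≤ (3/2) * lam * ∑ i ∈ S, |Δ i| := by
    rw [expand] at hcol
    have hdist : (1 / (2 * (T:ℝ))) * (∑ t, (Y t j - (X * Θstar) t j)^2 + 2 * C + Q)
        = (1 / (2 * (T:ℝ))) * (∑ t, (Y t j - (X * Θstar) t j)^2)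
          + (1/(T:ℝ)) * C + (1 / (2 * (T:ℝ))) * Q := by
      field_simp
    rw [hdist] at hcol
    nlinarith [hE2, hsuppb, hsplit, hScnn, hlam]
  -- Cauchy–Schwarz on the support
  have hCS : ∑ i ∈ S, |Δ i| ≤ Real.sqrt s * Real.sqrt (∑ i, Δ i ^ 2) := by
    have h1 : (∑ i ∈ S, |Δ i|)^2 ≤ (S.card : ℝ) * ∑ i ∈ S, |Δ i| ^ 2 := by
      exact_mod_cast sq_sum_le_card_mul_sum_sq (s := S) (f := fun i => |Δ i|)
    have h2 : ∑ i ∈ S, |Δ i| ^ 2 ≤ ∑ i, Δ i ^ 2 := by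
      rw [Finset.sum_congr rfl (fun i _ => sq_abs (Δ i))]
      exact Finset.sum_le_sum_of_subset_of_nonneg (Finset.subset_univ S)
        (fun i _ _ => sq_nonneg _)
    have h3 : (S.card : ℝ) ≤ (s : ℝ) := by exact_mod_cast hsupp j
    have h4 : (∑ i ∈ S, |Δ i|)^2 ≤ (s : ℝ) * ∑ i, Δ i ^ 2 := by
      calc (∑ i ∈ S, |Δ i|)^2 ≤ (S.card : ℝ) * ∑ i ∈ S, |Δ i| ^ 2 := h1
        _ ≤ (s : ℝ) * ∑ i, Δ i ^ 2 := by
            apply mul_le_mul h3 h2 (Finset.sum_nonneg fun i _ => sq_nonneg _)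
              (Nat.cast_nonneg s)
    calc ∑ i ∈ S, |Δ i| = Real.sqrt ((∑ i ∈ S, |Δ i|)^2) := (Real.sqrt_sq hSnn).symm
      _ ≤ Real.sqrt ((s : ℝ) * ∑ i, Δ i ^ 2) := Real.sqrt_le_sqrt h4
      _ = Real.sqrt s * Real.sqrt (∑ i, Δ i ^ 2) := Real.sqrt_mul (Nat.cast_nonneg s) _
  -- final assembly
  rw [key]
  have hQid : (1/(T:ℝ)) * Q = 2 * ((1/(2*(T:ℝ))) * Q) := by field_simp
  have hnn : 0 ≤ lam * (Real.sqrt s * Real.sqrt (∑ i, Δ i ^ 2)) := by positivity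
  have : (1/(T:ℝ)) * Q ≤ 3 * lam * (Real.sqrt s * Real.sqrt (∑ i, Δ i ^ 2)) := by
    rw [hQid]
    have := mul_le_mul_of_nonneg_left hCS (le_of_lt hlam)
    linarith [hmain]
  linarith [this, hnn]
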